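/- Let T : U → V be a homeomorphism between two open sets in ℝⁿ that maps sets of Lebesgue measure zero to sets of Lebesgue measure zero, and suppose T is differentiable at a point p ∈ U. Then the interval function Φ(Q) = m(T(Q)) has density |det dT(p)| at p: for every ε > 0 there is τ > 0 such that |m(T(Q))/m(Q) − |det dT(p)|| ≤ ε for every closed axis-parallel cube Q ⊂ U with p ∈ Q and side length at most τ. -/

import Mathlib

open MeasureTheory Set Metric Pointwise

lemma cube_norm_sub_le {n : ℕ} {a : Fin n → ℝ} {δ : ℝ} (hδ : 0 ≤ δ) {x y : Fin n → ℝ}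
    (hx : x ∈ Icc a (fun i => a i + δ)) (hy : y ∈ Icc a (fun i => a i + δ)) :
    ‖x - y‖ ≤ δ := by
  rw [pi_norm_le_iff_of_nonneg hδ]
  intro i
  have h1 := hx.1 i; have h2 := hx.2 i; have h3 := hy.1 i; have h4 := hy.2 i
  simp only [Pi.sub_apply, Real.norm_eq_abs, abs_le] at *
  constructor <;> linarith

lemma aux_upper {n : ℕ} (T : (Fin n → ℝ) → (Fin n → ℝ)) (p : Fin n → ℝ)
    (T' : (Fin n → ℝ) →L[ℝ] (Fin n → ℝ)) (hTd : HasFDerivAt T T' p)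
    {ε : ℝ} (hε : 0 < ε) :
    ∃ τ > 0, ∀ (a : Fin n → ℝ) (δ : ℝ), 0 < δ → δ ≤ τ →
      p ∈ Set.Icc a (fun i => a i + δ) →
      volume (T '' Set.Icc a (fun i => a i + δ)) ≤
        ENNReal.ofReal ((|T'.det| + ε) * δ ^ n) := by
  set K : Set (Fin n → ℝ) := ⇑T' '' Icc 0 1 with hK
  have hKc : IsCompact K := isCompact_Icc.image T'.continuous
  have hKvol : volume K = ENNReal.ofReal |T'.det| := by
    rw [hK, Measure.addHaar_image_continuousLinearMap]
    have : volume (Icc (0 : Fin n → ℝ) 1) = 1 := by rw [Real.volume_Icc_pi]; simp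
    rw [this, mul_one]
  -- choose η with volume (cthickening η K) ≤ ofReal (|det| + ε)
  have htd := tendsto_measure_cthickening_of_isCompact (μ := volume) hKc
  have hlt : volume K < ENNReal.ofReal (|T'.det| + ε) := by
    rw [hKvol]
    exact ENNReal.ofReal_lt_ofReal_iff_of_nonneg (abs_nonneg _) |>.2 (by linarith)
  have hev : ∀ᶠ r in nhds (0 : ℝ), volume (cthickening r K) < ENNReal.ofReal (|T'.det| + ε) :=
    htd.eventually_lt_const hlt
  obtain ⟨η, hη0, hηvol⟩ : ∃ η > 0, volume (cthickening η K) ≤ ENNReal.ofReal (|T'.det| + ε) := by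
    rcases Metric.eventually_nhds_iff.1 hev with ⟨η₁, hη₁, h⟩
    exact ⟨η₁ / 2, by linarith, (h (by rw [Real.dist_eq]; rw [sub_zero]; rw [abs_of_pos (by linarith)]; linarith)).le⟩
  -- choose r from differentiability
  have hlo := hTd.isLittleO.def hη0
  rcases Metric.eventually_nhds_iff.1 hlo with ⟨r, hr0, hr⟩
  refine ⟨r / 2, by linarith, fun a δ hδ hδτ hpQ => ?_⟩
  set b : Fin n → ℝ := fun i => a i + δ with hb
  set v : Fin n → ℝ := T p + T' (a - p) with hv
  have hincl : T '' Icc a b ⊆ v +ᵥ δ • cthickening η K := by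
    rintro _ ⟨x, hx, rfl⟩
    have hxp : ‖x - p‖ ≤ δ := cube_norm_sub_le hδ.le hx hpQ
    have hxr : dist x p < r := by
      rw [dist_eq_norm]; calc ‖x - p‖ ≤ δ := hxp
        _ < r := by linarith
    have he : ‖T x - T p - T' (x - p)‖ ≤ η * δ := by
      calc ‖T x - T p - T' (x - p)‖ ≤ η * ‖x - p‖ := hr hxr
        _ ≤ η * δ := by nlinarith
    refine ⟨δ • (δ⁻¹ • (T x - v)), smul_mem_smul_set ?_, by
      simp [smul_smul, mul_inv_cancel₀ hδ.ne', vadd_eq_add]⟩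
    refine mem_cthickening_of_dist_le _ (T' (δ⁻¹ • (x - a))) _ _ ⟨δ⁻¹ • (x - a), ?_, rfl⟩ ?_
    · constructor <;> intro i <;>
        simp only [Pi.smul_apply, Pi.sub_apply, smul_eq_mul, Pi.zero_apply, Pi.one_apply]
      · have h1 := hx.1 i
        have h0 : (0:ℝ) ≤ x i - a i := by linarith
        positivity
      · have h1 := hx.1 i; have h2 := hx.2 i
        rw [inv_mul_le_iff₀ hδ, mul_one]
        simp only [hb] at h2; linarith
    · have h2 : x - a + (a - p) = x - p := by abel
      have heq : T x - v - T' (x - a) = T x - T p - T' (x - p) := by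
        rw [hv, ← h2, map_add]; abel
      rw [dist_eq_norm, T'.map_smul, ← smul_sub, norm_smul, heq, Real.norm_eq_abs,
        abs_of_pos (inv_pos.2 hδ), inv_mul_le_iff₀ hδ]
      calc ‖T x - T p - T' (x - p)‖ ≤ η * δ := he
        _ = δ * η := mul_comm _ _
  calc volume (T '' Icc a b) ≤ volume (v +ᵥ δ • cthickening η K) := measure_mono hincl
    _ = ENNReal.ofReal (|δ| ^ n) * volume (cthickening η K) := by
        rw [measure_vadd, Measure.addHaar_smul]
        congr 1
        rw [abs_pow]
        congr 1
        simp [Module.finrank_pi]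
    _ ≤ ENNReal.ofReal (|δ| ^ n) * ENNReal.ofReal (|T'.det| + ε) :=
        mul_le_mul_right hηvol _
    _ = ENNReal.ofReal ((|T'.det| + ε) * δ ^ n) := by
        rw [← ENNReal.ofReal_mul (by positivity), abs_of_pos hδ, mul_comm]

set_option maxHeartbeats 2000000 in
lemma aux_lower {n : ℕ}
    (U V : Set (Fin n → ℝ)) (hV : IsOpen V)
    (T S : (Fin n → ℝ) → (Fin n → ℝ))
    (hT : Set.BijOn T U V) (hTc : ContinuousOn T U)
    (hSc : ContinuousOn S V) (hinv : Set.InvOn S T U V)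
    (p : Fin n → ℝ) (T' : (Fin n → ℝ) →L[ℝ] (Fin n → ℝ)) (hTd : HasFDerivAt T T' p)
    (hdet : T'.det ≠ 0) {ε : ℝ} (hε : 0 < ε) :
    ∃ τ > 0, ∀ (a : Fin n → ℝ) (δ : ℝ), 0 < δ → δ ≤ τ →
      p ∈ Set.Icc a (fun i => a i + δ) → Set.Icc a (fun i => a i + δ) ⊆ U →
      ENNReal.ofReal ((|T'.det| - ε) * δ ^ n) ≤
        volume (T '' Set.Icc a (fun i => a i + δ)) := by
  set d := |T'.det| with hd
  have hd0 : 0 < d := abs_pos.2 hdet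
  obtain ⟨B, hBcoe⟩ : ∃ B : (Fin n → ℝ) ≃L[ℝ] (Fin n → ℝ), ∀ x, B x = T' x :=
    ⟨T'.toContinuousLinearEquivOfDetNeZero hdet, fun x => by simp⟩
  set Bs : (Fin n → ℝ) →L[ℝ] (Fin n → ℝ) := (B.symm : (Fin n → ℝ) →L[ℝ] (Fin n → ℝ)) with hBs
  set M := ‖Bs‖ + 1 with hM
  have hM0 : 0 < M := by positivity
  have hM1 : ‖Bs‖ ≤ M := by rw [hM]; linarith
  set θ := min (1/4 : ℝ) (ε / (2 * n * d + 1)) with hθ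
  have hθ0 : 0 < θ := lt_min (by norm_num) (by positivity)
  have hθ4 : θ ≤ 1/4 := min_le_left _ _
  have hθε : d * (2 * n * θ) ≤ ε := by
    have h1 : θ ≤ ε / (2 * n * d + 1) := min_le_right _ _
    rw [le_div_iff₀ (by positivity)] at h1
    nlinarith [hθ0.le, hd0.le]
  set η := θ / (2 * M) with hη
  have hη0 : 0 < η := by positivity
  have hηM : M * η < θ := by
    rw [hη]
    rw [mul_div_assoc']
    rw [div_lt_iff₀ (by positivity)]
    nlinarith
  have hlo := hTd.isLittleO.def hη0
  rcases Metric.eventually_nhds_iff.1 hlo with ⟨r, hr0, hr⟩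
  refine ⟨r / 2, by linarith, fun a δ hδ hδτ hpQ hQU => ?_⟩
  set b : Fin n → ℝ := fun i => a i + δ with hb
  have herr : ∀ x ∈ Icc a b, ‖T x - T p - T' (x - p)‖ ≤ η * δ := by
    intro x hx
    have hxp : ‖x - p‖ ≤ δ := cube_norm_sub_le hδ.le hx hpQ
    have hdist : dist x p < r := by rw [dist_eq_norm]; linarith
    calc ‖T x - T p - T' (x - p)‖ ≤ η * ‖x - p‖ := hr hdist
      _ ≤ η * δ := by nlinarith
  set S' : Set (Fin n → ℝ) :=
    Icc (fun i => a i + θ * δ) (fun i => a i + δ - θ * δ) with hS'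
  set K₀ : Set (Fin n → ℝ) := (fun x => T p + T' (x - p)) '' S' with hK₀
  have hcont : Continuous fun x : Fin n → ℝ => T p + T' (x - p) :=
    continuous_const.add (T'.continuous.comp (continuous_id.sub continuous_const))
  have hconn : IsPreconnected K₀ :=
    ((convex_Icc _ _).isPreconnected).image _ hcont.continuousOn
  set O : Set (Fin n → ℝ) := pi univ (fun i => Ioo (a i) (b i)) with hO
  have hOIcc : O ⊆ Icc a b := fun x hx =>
    ⟨fun i => (hx i (mem_univ i)).1.le, fun i => (hx i (mem_univ i)).2.le⟩
  have hIooU : O ⊆ U := hOIcc.trans hQU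
  have hopen1 : IsOpen (T '' O) := by
    have himg : T '' O = V ∩ S ⁻¹' O := by
      ext y; constructor
      · rintro ⟨x, hx, rfl⟩
        exact ⟨hT.mapsTo (hIooU hx), by rw [mem_preimage, hinv.1 (hIooU hx)]; exact hx⟩
      · rintro ⟨hyV, hy⟩
        exact ⟨S y, hy, hinv.2 hyV⟩
    rw [himg]
    exact hSc.isOpen_inter_preimage hV (isOpen_set_pi finite_univ fun i _ => isOpen_Ioo)
  have hcpt : IsCompact (T '' Icc a b) := isCompact_Icc.image_of_continuousOn (hTc.mono hQU)
  -- small Bsymm errors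
  have hBsmall : ∀ x ∈ Icc a b, ‖Bs (T x - T p - T' (x - p))‖ < θ * δ := by
    intro x hx
    calc ‖Bs (T x - T p - T' (x - p))‖
        ≤ ‖Bs‖ * ‖T x - T p - T' (x - p)‖ := Bs.le_opNorm _
      _ ≤ M * (η * δ) := by
          have := herr x hx
          have h0 : (0:ℝ) ≤ ‖T x - T p - T' (x - p)‖ := norm_nonneg _
          nlinarith [norm_nonneg Bs]
      _ < θ * δ := by nlinarith
  have hsep : ∀ w ∈ S', ∀ x ∈ Icc a b, T x = T p + T' (w - p) → x ∈ O := by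
    intro w hw x hx hxw
    have h1 : T' (w - x) = T x - T p - T' (x - p) := by
      have h2 : T' (w - p) - T' (x - p) = T' (w - x) := by
        rw [← map_sub]; congr 1; abel
      rw [← h2, hxw]; abel
    have h2 : w - x = Bs (T x - T p - T' (x - p)) := by
      rw [← h1, ← hBcoe]
      rw [hBs]
      simp
    have h3 : ‖w - x‖ < θ * δ := by rw [h2]; exact hBsmall x hx
    intro i _
    have hcomp : |w i - x i| ≤ ‖w - x‖ := by
      have := norm_le_pi_norm (w - x) i
      simpa [Real.norm_eq_abs] using this
    have habs : |w i - x i| < θ * δ := lt_of_le_of_lt hcomp h3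
    rw [abs_lt] at habs
    have hw1 := hw.1 i; have hw2 := hw.2 i
    simp only [hS'] at hw1 hw2
    constructor
    · show a i < x i
      linarith
    · show x i < b i
      simp only [hb]
      linarith
  -- center point
  set c : Fin n → ℝ := fun i => a i + δ / 2 with hc
  have hcQ : c ∈ Icc a b := by
    constructor <;> intro i <;> simp only [hc, hb] <;> linarith
  have hcO : c ∈ O := by
    intro i _
    simp only [hc, hb]
    constructor <;> [linarith; linarith]
  have hTcK : T c ∈ K₀ := by
    set e : Fin n → ℝ := T c - T p - T' (c - p) with he
    have hes : ‖Bs e‖ < θ * δ := hBsmall c hcQ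
    refine ⟨c + Bs e, ?_, ?_⟩
    · constructor <;> intro i <;>
      · have hcomp : |Bs e i| ≤ ‖Bs e‖ := by
          have := norm_le_pi_norm (Bs e) i
          simpa [Real.norm_eq_abs] using this
        have habs : |Bs e i| < θ * δ := lt_of_le_of_lt hcomp hes
        rw [abs_lt] at habs
        simp only [hS', hc, Pi.add_apply]
        first
        | · show a i + θ * δ ≤ a i + δ / 2 + Bs e i
            nlinarith
        | · show a i + δ / 2 + Bs e i ≤ a i + δ - θ * δ
            nlinarith
    · have hTe : T' (Bs e) = e := by
        have h1 : T' (Bs e) = B (Bs e) := (hBcoe _).symm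
        have h2 : B (Bs e) = e := by
          simp only [hBs]
          exact B.apply_symm_apply e
        rw [h1, h2]
      show T p + T' (c + Bs e - p) = T c
      have : T' (c + Bs e - p) = T' (c - p) + e := by
        rw [show c + Bs e - p = (c - p) + Bs e by abel, map_add, hTe]
      rw [this, he]
      abel
  have hnonempty : (K₀ ∩ T '' O).Nonempty := ⟨T c, hTcK, ⟨c, hcO, rfl⟩⟩
  have hcover : K₀ ⊆ T '' O ∪ (T '' Icc a b)ᶜ := by
    rintro z ⟨w, hw, rfl⟩
    by_cases hz : T p + T' (w - p) ∈ T '' Icc a b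
    · obtain ⟨x, hxQ, hxz⟩ := hz
      exact Or.inl ⟨x, hsep w hw x hxQ hxz, hxz⟩
    · exact Or.inr hz
  have hdisj : Disjoint (T '' O) (T '' Icc a b)ᶜ :=
    disjoint_compl_right.mono_left (image_mono hOIcc)
  have hsub : K₀ ⊆ T '' O :=
    hconn.subset_left_of_subset_union hopen1 (isOpen_compl_iff.2 hcpt.isClosed)
      hdisj hcover hnonempty
  have hKQ : K₀ ⊆ T '' Icc a b := hsub.trans (image_mono hOIcc)
  -- measure computation
  have hvolS' : volume S' = ENNReal.ofReal ((δ - 2 * θ * δ) ^ n) := by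
    rw [hS', Real.volume_Icc_pi]
    have heach : ∀ i : Fin n, (fun i => a i + δ - θ * δ) i - (fun i => a i + θ * δ) i
        = δ - 2 * θ * δ := fun i => by ring
    simp_rw [heach]
    rw [Finset.prod_const, Finset.card_univ, Fintype.card_fin,
      ← ENNReal.ofReal_pow (by nlinarith)]
  have hK₀vol : volume K₀ = ENNReal.ofReal d * ENNReal.ofReal ((δ - 2 * θ * δ) ^ n) := by
    have himg : K₀ = (fun y => (T p - T' p) + y) '' (⇑T' '' S') := by
      rw [hK₀, Set.image_image]
      apply Set.image_congr
      intro x _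
      rw [map_sub]
      abel
    have hvadd : (fun y => (T p - T' p) + y) '' (⇑T' '' S') = (T p - T' p) +ᵥ (⇑T' '' S') := by
      rfl
    rw [himg, hvadd, measure_vadd, Measure.addHaar_image_continuousLinearMap, hvolS']
  calc ENNReal.ofReal ((|T'.det| - ε) * δ ^ n)
      ≤ ENNReal.ofReal (d * (δ - 2 * θ * δ) ^ n) := by
        apply ENNReal.ofReal_le_ofReal
        have hb1 : (1 : ℝ) - (n : ℝ) * (2 * θ) ≤ (1 - 2 * θ) ^ n := by
          have h := one_add_mul_le_pow (a := -(2 * θ)) (by nlinarith) n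
          have heq : (1 : ℝ) + -(2 * θ) = 1 - 2 * θ := by ring
          rw [heq] at h
          linarith
        have hfact : (δ - 2 * θ * δ) ^ n = (1 - 2 * θ) ^ n * δ ^ n := by
          rw [← mul_pow]; ring_nf
        rw [hfact, ← hd]
        have h2 : d - ε ≤ d * (1 - 2 * θ) ^ n := by
          nlinarith [mul_le_mul_of_nonneg_left hb1 hd0.le, hθε]
        have h3 : (0:ℝ) ≤ δ ^ n := by positivity
        nlinarith [mul_le_mul_of_nonneg_right h2 h3]
    _ = volume K₀ := by
        rw [hK₀vol, ← ENNReal.ofReal_mul hd0.le]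
    _ ≤ volume (T '' Icc a b) := measure_mono hKQ


theorem volume_image_hasDensity_abs_det_fderiv {n : ℕ}
    (U V : Set (Fin n → ℝ)) (hU : IsOpen U) (hV : IsOpen V)
    (T S : (Fin n → ℝ) → (Fin n → ℝ))
    (hT : Set.BijOn T U V) (hTc : ContinuousOn T U)
    (hSc : ContinuousOn S V) (hinv : Set.InvOn S T U V)
    (hnull : ∀ A : Set (Fin n → ℝ), A ⊆ U → volume A = 0 → volume (T '' A) = 0)
    (p : Fin n → ℝ) (hp : p ∈ U)
    (T' : (Fin n → ℝ) →L[ℝ] (Fin n → ℝ)) (hTd : HasFDerivAt T T' p) :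
    ∀ ε > 0, ∃ τ > 0, ∀ (a : Fin n → ℝ) (δ : ℝ), 0 < δ → δ ≤ τ →
      p ∈ Set.Icc a (fun i => a i + δ) → Set.Icc a (fun i => a i + δ) ⊆ U →
      abs ((volume (T '' Set.Icc a (fun i => a i + δ))).toReal /
          (volume (Set.Icc a (fun i => a i + δ))).toReal - |T'.det|) ≤ ε := by
  intro ε hε
  obtain ⟨τ₁, hτ₁0, hup⟩ := aux_upper T p T' hTd hε
  obtain ⟨τ₂, hτ₂0, hlo⟩ : ∃ τ > 0, ∀ (a : Fin n → ℝ) (δ : ℝ), 0 < δ → δ ≤ τ →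
      p ∈ Set.Icc a (fun i => a i + δ) → Set.Icc a (fun i => a i + δ) ⊆ U →
      ENNReal.ofReal ((|T'.det| - ε) * δ ^ n) ≤
        volume (T '' Set.Icc a (fun i => a i + δ)) := by
    rcases eq_or_ne T'.det 0 with h0 | h0
    · refine ⟨1, one_pos, fun a δ hδ _ _ _ => ?_⟩
      have hnp : (|T'.det| - ε) * δ ^ n ≤ 0 := by
        rw [h0, abs_zero]
        have : (0:ℝ) ≤ δ ^ n := by positivity
        nlinarith
      rw [ENNReal.ofReal_of_nonpos hnp]
      exact zero_le
    · exact aux_lower U V hV T S hT hTc hSc hinv p T' hTd h0 hε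
  refine ⟨min τ₁ τ₂, lt_min hτ₁0 hτ₂0, fun a δ hδ hδτ hpQ hQU => ?_⟩
  set b : Fin n → ℝ := fun i => a i + δ with hb
  have hab : a ≤ b := fun i => by simp [hb]; linarith
  have hvolQ : (volume (Icc a b)).toReal = δ ^ n := by
    rw [Real.volume_Icc_pi_toReal hab]
    have heach : ∀ i : Fin n, b i - a i = δ := fun i => by simp [hb]
    simp_rw [heach]
    rw [Finset.prod_const, Finset.card_univ, Fintype.card_fin]
  have hfin : volume (T '' Icc a b) ≠ ⊤ :=
    ((isCompact_Icc.image_of_continuousOn (hTc.mono hQU)).measure_lt_top).ne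
  have hub : (volume (T '' Icc a b)).toReal ≤ (|T'.det| + ε) * δ ^ n := by
    have h1 := hup a δ hδ (hδτ.trans (min_le_left _ _)) hpQ
    calc (volume (T '' Icc a b)).toReal
        ≤ (ENNReal.ofReal ((|T'.det| + ε) * δ ^ n)).toReal :=
          ENNReal.toReal_mono ENNReal.ofReal_ne_top h1
      _ ≤ (|T'.det| + ε) * δ ^ n := le_of_eq (ENNReal.toReal_ofReal (by positivity))
  have hlb : (|T'.det| - ε) * δ ^ n ≤ (volume (T '' Icc a b)).toReal :=
    (ENNReal.ofReal_le_iff_le_toReal hfin).1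
      (hlo a δ hδ (hδτ.trans (min_le_right _ _)) hpQ hQU)
  rw [hvolQ]
  have hδn : (0:ℝ) < δ ^ n := by positivity
  rw [abs_le]
  constructor
  · have h := (le_div_iff₀ hδn).2 hlb
    linarith
  · have h := (div_le_iff₀ hδn).2 hub
    linarith
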